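/- Let 0 < γ < 1 and define q_m = ∫_{-1}^1 P_m(x)(1-x^2)^{-γ} dx, where P_m is the Legendre polynomial of degree m. Then q_m = 0 whenever m is odd, q_0 = 2^{1-2γ} Γ(1-γ)^2 / Γ(2-2γ), and for even m, q_{m+2} = ((m+2γ)(m+1))/((m+3-2γ)(m+2)) · q_m. -/

import Mathlib

open Polynomial intervalIntegral Filter

/-- Legendre polynomial of degree `n` on `[-1,1]`, normalized so `P n 1 = 1`
(Rodrigues' formula). -/
noncomputable def legendrePoly (n : ℕ) : Polynomial ℝ :=
  C ((2 ^ n * n.factorial : ℝ))⁻¹ * derivative^[n] ((X ^ 2 - 1) ^ n)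

/-- Pointwise Legendre polynomial. -/
noncomputable def P (n : ℕ) (x : ℝ) : ℝ := (legendrePoly n).eval x

/-- First derivative of the Legendre polynomial. -/
noncomputable def P' (n : ℕ) (x : ℝ) : ℝ := ((legendrePoly n).derivative).eval x

/-- Second derivative of the Legendre polynomial. -/
noncomputable def P'' (n : ℕ) (x : ℝ) : ℝ := ((legendrePoly n).derivative.derivative).eval x

open MeasureTheory Set


noncomputable def uu (n : ℕ) : Polynomial ℝ := ((X : Polynomial ℝ) ^ 2 - 1) ^ n

lemma itD_add (k : ℕ) (p q : Polynomial ℝ) :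
    derivative^[k] (p + q) = derivative^[k] p + derivative^[k] q := by
  induction k generalizing p q with
  | zero => simp
  | succ k ih => simp [Function.iterate_succ_apply, derivative_add, ih]

lemma itD_comm (k : ℕ) (p : Polynomial ℝ) :
    derivative^[k] (derivative p) = derivative^[k+1] p := by
  rw [← Function.iterate_succ_apply]

lemma dX2 : derivative ((X : Polynomial ℝ)^2 - 1) = C 2 * X := by
  simp [derivative_sub, derivative_pow]

-- Leibniz for X * p
lemma lemB (k : ℕ) : ∀ p : Polynomial ℝ,
    derivative^[k+1] (X * p) = X * derivative^[k+1] p + C ((k : ℝ) + 1) * derivative^[k] p := by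
  induction k with
  | zero => intro p; simp [derivative_mul]; ring
  | succ k ih =>
    intro p
    have h1 : derivative^[k+2] (X * p) = derivative^[k+1] (derivative (X * p)) := by
      rw [← Function.iterate_succ_apply]
    rw [h1]
    have h2 : derivative (X * p) = p + X * derivative p := by simp [derivative_mul]
    rw [h2, itD_add, ih (derivative p), itD_comm, itD_comm]
    push_cast
    simp only [map_add, map_one, map_ofNat, map_natCast]
    ring

-- Leibniz for (X^2-1) * derivative p
lemma lemA (k : ℕ) : ∀ p : Polynomial ℝ,
    derivative^[k+1] (((X : Polynomial ℝ)^2 - 1) * derivative p)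
      = ((X : Polynomial ℝ)^2 - 1) * derivative^[k+2] p
        + C (2*((k : ℝ)+1)) * (X * derivative^[k+1] p)
        + C (((k : ℝ)+1)*(k : ℝ)) * derivative^[k] p := by
  induction k with
  | zero =>
    intro p
    have h2 : derivative (((X:Polynomial ℝ)^2-1) * derivative p)
        = C 2 * (X * derivative p) + ((X:Polynomial ℝ)^2-1) * derivative (derivative p) := by
      rw [derivative_mul, dX2]; ring
    simp only [Function.iterate_one, h2, itD_comm, Function.iterate_succ_apply',
      Function.iterate_zero, id_eq, Function.iterate_one]
    simp only [map_add, map_one, map_ofNat, map_natCast, map_mul, map_zero]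
    norm_num
    ring
  | succ k ih =>
    intro p
    have h1 : derivative^[k+2] (((X:Polynomial ℝ)^2-1) * derivative p)
        = derivative^[k+1] (derivative (((X:Polynomial ℝ)^2-1) * derivative p)) := by
      rw [← Function.iterate_succ_apply]
    have h2 : derivative (((X:Polynomial ℝ)^2-1) * derivative p)
        = C 2 * (X * derivative p) + ((X:Polynomial ℝ)^2-1) * derivative (derivative p) := by
      rw [derivative_mul, dX2]; ring
    rw [h1, h2, itD_add, iterate_derivative_C_mul, lemB k (derivative p), ih (derivative p)]
    rw [itD_comm, itD_comm, itD_comm]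
    push_cast
    simp only [map_add, map_one, map_ofNat, map_natCast, map_mul]
    ring

lemma du (n : ℕ) : derivative (uu (n+1)) = C (2*((n:ℝ)+1)) * (X * uu n) := by
  unfold uu
  rw [derivative_pow]
  simp only [dX2, Nat.add_sub_cancel, Nat.cast_add, Nat.cast_one]
  push_cast
  simp only [map_add, map_mul, map_ofNat, map_one]
  ring

lemma rootD_aux (j : ℕ) : ∀ p : Polynomial ℝ, ((X - C 1)^(j+1) ∣ p) → (derivative^[j] p).IsRoot 1 := by
  induction j with
  | zero =>
    intro p hp
    simpa using (dvd_iff_isRoot.mp (by simpa using hp))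
  | succ j ih =>
    intro p hp
    obtain ⟨q, hq⟩ := hp
    have hdvd : (X - C (1:ℝ))^(j+1) ∣ derivative p := by
      refine ⟨C ((j:ℝ)+2) * q + (X - C 1) * derivative q, ?_⟩
      rw [hq, derivative_mul, derivative_pow]
      simp only [derivative_sub, derivative_X, derivative_C, sub_zero, Nat.add_sub_cancel]
      push_cast
      simp only [map_add, map_ofNat, map_one]
      ring
    have := ih (derivative p) hdvd
    rwa [itD_comm] at this
    
lemma rootD {k n : ℕ} (h : k < n) : (derivative^[k] (uu n)).eval 1 = 0 := by
  have hfac : uu n = (X - C (1:ℝ))^n * (X + C 1)^n := by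
    unfold uu
    rw [← mul_pow]
    congr 1
    simp only [C_1]
    ring
  have hdvd : (X - C (1:ℝ))^(k+1) ∣ uu n := by
    rw [hfac]
    exact Dvd.dvd.mul_right (pow_dvd_pow _ h) _
  exact rootD_aux k (uu n) hdvd

lemma Tlem (n : ℕ)
    (hS : ((X:Polynomial ℝ)^2 - 1) * derivative^[n+3] (uu (n+1))
      + C 2 * (X * derivative^[n+2] (uu (n+1)))
      = C (((n:ℝ)+1)*((n:ℝ)+2)) * derivative^[n+1] (uu (n+1))) :
    ((X:Polynomial ℝ)^2 - 1) * derivative^[n+2] (uu (n+1))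
      = C (((n:ℝ)+1)*((n:ℝ)+2)) * derivative^[n] (uu (n+1)) := by
  set Φ : Polynomial ℝ := ((X:Polynomial ℝ)^2 - 1) * derivative^[n+2] (uu (n+1))
      - C (((n:ℝ)+1)*((n:ℝ)+2)) * derivative^[n] (uu (n+1)) with hΦ
  have hd : derivative Φ = 0 := by
    rw [hΦ, derivative_sub, derivative_mul, derivative_mul, derivative_C, dX2]
    have e1 : derivative (derivative^[n+2] (uu (n+1))) = derivative^[n+3] (uu (n+1)) := by
      rw [← Function.iterate_succ_apply' derivative (n+2)]
    have e2 : derivative (derivative^[n] (uu (n+1))) = derivative^[n+1] (uu (n+1)) := by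
      rw [← Function.iterate_succ_apply' derivative n]
    rw [e1, e2]
    simp only [map_add, map_mul, map_ofNat, map_one] at hS ⊢
    linear_combination hS
  have hc : Φ = C (Φ.coeff 0) := eq_C_of_derivative_eq_zero hd
  have he : Φ.eval 1 = 0 := by
    rw [hΦ]
    simp only [eval_sub, eval_mul, eval_pow, eval_X, eval_one, eval_C]
    rw [rootD (Nat.lt_succ_self n)]
    norm_num
  rw [hc] at he
  simp only [eval_C] at he
  have : Φ = 0 := by rw [hc, he, map_zero]
  rw [hΦ] at this
  linear_combination this

lemma itD_Cmul_comm (k : ℕ) (c : ℝ) (p : Polynomial ℝ) :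
    derivative^[k] (C c * p) = C c * derivative^[k] p := iterate_derivative_C_mul c p k

lemma uODE : ∀ n : ℕ, ((X:Polynomial ℝ)^2 - 1) * derivative^[n+2] (uu n)
    + C 2 * (X * derivative^[n+1] (uu n))
    = C ((n:ℝ)*((n:ℝ)+1)) * derivative^[n] (uu n) := by
  intro n
  induction n with
  | zero =>
    show ((X:Polynomial ℝ)^2 - 1) * derivative^[2] (uu 0) + C 2 * (X * derivative^[1] (uu 0)) = _
    unfold uu
    norm_num
  | succ m ih =>
    cases m with
    | zero =>
      have h1 : ((X:Polynomial ℝ)^2 - 1) * derivative^[3] (uu 1) + C 2 * (X * derivative^[2] (uu 1))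
          = C ((1:ℝ)*((1:ℝ)+1)) * derivative^[1] (uu 1) := by
        unfold uu
        simp only [pow_one, Function.iterate_succ_apply, Function.iterate_zero, id_eq,
          Function.iterate_one, dX2]
        simp only [derivative_mul, derivative_C, derivative_X, zero_mul, mul_one, zero_add,
          derivative_one, mul_zero, add_zero]
        simp only [map_add, map_mul, map_ofNat, map_one]
        ring
      convert h1 using 3 <;> push_cast <;> ring_nf
    | succ k =>
      -- ih : S (k+1), goal : S (k+2)
      have ih' : ((X:Polynomial ℝ)^2 - 1) * derivative^[k+3] (uu (k+1))
          + C 2 * (X * derivative^[k+2] (uu (k+1)))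
          = C (((k:ℝ)+1)*((k:ℝ)+2)) * derivative^[k+1] (uu (k+1)) := by
        convert ih using 3 <;> push_cast <;> ring_nf
      have hT := Tlem k ih' 
      have e4 : derivative^[k+4] (uu (k+2)) = C (2*((k:ℝ)+2)) * (X * derivative^[k+3] (uu (k+1))
          + C ((k:ℝ)+3) * derivative^[k+2] (uu (k+1))) := by
        have : derivative^[k+4] (uu (k+2)) = derivative^[k+3] (derivative (uu (k+2))) := by
          rw [itD_comm]
        rw [this, du (k+1), itD_Cmul_comm, lemB (k+2) (uu (k+1))]
        push_cast; ring_nf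
      have e3 : derivative^[k+3] (uu (k+2)) = C (2*((k:ℝ)+2)) * (X * derivative^[k+2] (uu (k+1))
          + C ((k:ℝ)+2) * derivative^[k+1] (uu (k+1))) := by
        have : derivative^[k+3] (uu (k+2)) = derivative^[k+2] (derivative (uu (k+2))) := by
          rw [itD_comm]
        rw [this, du (k+1), itD_Cmul_comm, lemB (k+1) (uu (k+1))]
        push_cast; ring_nf
      have e2 : derivative^[k+2] (uu (k+2)) = C (2*((k:ℝ)+2)) * (X * derivative^[k+1] (uu (k+1))
          + C ((k:ℝ)+1) * derivative^[k] (uu (k+1))) := by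
        have : derivative^[k+2] (uu (k+2)) = derivative^[k+1] (derivative (uu (k+2))) := by
          rw [itD_comm]
        rw [this, du (k+1), itD_Cmul_comm, lemB k (uu (k+1))]
        push_cast; ring_nf
      rw [e4, e3, e2]
      push_cast at ih hT ⊢
      simp only [map_add, map_mul, map_ofNat, map_one] at ih hT ⊢
      linear_combination ((C (k:ℝ) + 2) * 2 * X) * ih + ((C (k:ℝ) + 2) * 2 * (C (k:ℝ) + 3)) * hT

noncomputable def cc (n : ℕ) : ℝ := ((2 ^ n * n.factorial : ℝ))⁻¹

lemma LPdef (n : ℕ) : legendrePoly n = C (cc n) * derivative^[n] (uu n) := rfl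

lemma cc_ne (n : ℕ) : (2 ^ n * n.factorial : ℝ) ≠ 0 := by positivity

lemma cfac (n : ℕ) : cc (n+1) * (2*((n:ℝ)+1)) = cc n := by
  unfold cc
  have h : ((2:ℝ) ^ (n+1) * (n+1).factorial) = (2 ^ n * n.factorial) * (2*((n:ℝ)+1)) := by
    rw [Nat.factorial_succ]
    push_cast
    ring
  rw [h, mul_inv]
  field_simp

lemma dLP (n : ℕ) : derivative (legendrePoly n) = C (cc n) * derivative^[n+1] (uu n) := by
  rw [LPdef, derivative_C_mul, ← Function.iterate_succ_apply' derivative n]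

lemma ddLP (n : ℕ) : derivative (derivative (legendrePoly n)) = C (cc n) * derivative^[n+2] (uu n) := by
  rw [dLP, derivative_C_mul, ← Function.iterate_succ_apply' derivative (n+1)]

lemma uODE' (n : ℕ) : ((X:Polynomial ℝ)^2 - 1) * derivative^[n+2] (uu n)
    + C 2 * (X * derivative^[n+1] (uu n))
    = C ((n:ℝ)*((n:ℝ)+1)) * derivative^[n] (uu n) := uODE n

lemma Tn (n : ℕ) : ((X:Polynomial ℝ)^2 - 1) * derivative^[n+2] (uu (n+1))
    = C (((n:ℝ)+1)*((n:ℝ)+2)) * derivative^[n] (uu (n+1)) := by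
  apply Tlem
  have := uODE' (n+1)
  convert this using 3 <;> push_cast <;> ring_nf

lemma PODE (n : ℕ) : ((1:Polynomial ℝ) - X^2) * derivative (derivative (legendrePoly n))
    = C 2 * (X * derivative (legendrePoly n)) - C ((n:ℝ)*((n:ℝ)+1)) * legendrePoly n := by
  rw [ddLP, dLP, LPdef]
  have h := uODE' n
  simp only [map_add, map_mul, map_ofNat, map_one] at h ⊢
  linear_combination (- C (cc n)) * h

lemma expand_it (n : ℕ) : derivative^[n+2] (uu (n+2))
    = C (2*((n:ℝ)+2)) * (X * derivative^[n+1] (uu (n+1)) + C ((n:ℝ)+1) * derivative^[n] (uu (n+1))) := by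
  have h0 : derivative^[n+2] (uu (n+2)) = derivative^[n+1] (derivative (uu (n+2))) := by
    rw [itD_comm]
  rw [h0, du (n+1), itD_Cmul_comm, lemB n (uu (n+1))]
  push_cast
  ring_nf

lemma ccC (n : ℕ) : (C (cc (n+1)) : Polynomial ℝ) * (2 * (C (n:ℝ) + 1)) = C (cc n) := by
  have h := congrArg (fun r : ℝ => (C r : Polynomial ℝ)) (cfac n)
  simpa only [map_mul, map_add, map_ofNat, map_one] using h

lemma PI (n : ℕ) : derivative (legendrePoly (n+1))
    = X * derivative (legendrePoly n) + C ((n:ℝ)+1) * legendrePoly n := by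
  rw [dLP, dLP, LPdef]
  have h0 : derivative^[n+2] (uu (n+1)) = derivative^[n+1] (derivative (uu (n+1))) := by
    rw [itD_comm]
  rw [h0, du n, itD_Cmul_comm, lemB n (uu n)]
  have hc := ccC n
  simp only [map_add, map_mul, map_ofNat, map_one] at hc ⊢
  linear_combination (X * derivative^[n+1] (uu n) + (C (n:ℝ) + 1) * derivative^[n] (uu n)) * hc

lemma cfac2 (n : ℕ) : cc (n+2) * (2*((n:ℝ)+2)) = cc (n+1) := by
  unfold cc
  have h : ((2:ℝ) ^ (n+2) * (n+2).factorial) = (2 ^ (n+1) * (n+1).factorial) * (2*((n:ℝ)+2)) := by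
    rw [Nat.factorial_succ]
    push_cast
    ring
  rw [h, mul_inv]
  field_simp

lemma ccC2 (n : ℕ) : (C (cc (n+2)) : Polynomial ℝ) * (2 * (C (n:ℝ) + 2)) = C (cc (n+1)) := by
  have h := congrArg (fun r : ℝ => (C r : Polynomial ℝ)) (cfac2 n)
  simpa only [map_mul, map_add, map_ofNat, map_one] using h

lemma PIII (n : ℕ) : ((X:Polynomial ℝ)^2 - 1) * derivative (legendrePoly (n+1))
    = C ((n:ℝ)+2) * legendrePoly (n+2) - C ((n:ℝ)+2) * (X * legendrePoly (n+1)) := by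
  rw [dLP, LPdef, LPdef, expand_it]
  have hT := Tn n
  have hc := ccC2 n
  simp only [map_add, map_mul, map_ofNat, map_one] at hT hc ⊢
  linear_combination C (cc (n+1)) * hT
    - ((C (n:ℝ) + 2) * (X * derivative^[n+1] (uu (n+1)) + (C (n:ℝ) + 1) * derivative^[n] (uu (n+1)))) * hc

lemma PII (n : ℕ) : X * derivative (legendrePoly (n+2))
    = C ((n:ℝ)+2) * legendrePoly (n+2) + derivative (legendrePoly (n+1)) := by
  have h1 := PI (n+1)
  have h3 := PIII n
  have h1' : derivative (legendrePoly (n+2)) = X * derivative (legendrePoly (n+1)) + C ((n:ℝ)+2) * legendrePoly (n+1) := by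
    convert h1 using 3 <;> push_cast <;> ring_nf
  simp only [map_add, map_mul, map_ofNat, map_one] at h1' h3 ⊢
  linear_combination X * h1' + h3

lemma dcompneg (p : Polynomial ℝ) :
    (derivative p).comp (-X) = - derivative (p.comp (-X)) := by
  rw [derivative_comp]
  simp

lemma parity_aux (k : ℕ) : ∀ p : Polynomial ℝ, p.comp (-X) = p →
    (derivative^[k] p).comp (-X) = (-1:Polynomial ℝ)^k * derivative^[k] p := by
  induction k with
  | zero => intro p hp; simpa using hp
  | succ k ih =>
    intro p hp
    rw [Function.iterate_succ_apply' derivative k p, dcompneg, ih p hp, derivative_mul]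
    simp only [derivative_pow, derivative_neg, derivative_one, neg_zero, mul_zero, zero_mul,
      mul_one, zero_add]
    ring

lemma uu_even (n : ℕ) : (uu n).comp (-X) = uu n := by
  unfold uu
  simp [pow_comp, sub_comp, neg_pow]

lemma LP_parity (n : ℕ) (x : ℝ) :
    (legendrePoly n).eval (-x) = (-1:ℝ)^n * (legendrePoly n).eval x := by
  have h1 : (legendrePoly n).comp (-X) = (-1:Polynomial ℝ)^n * legendrePoly n := by
    rw [LPdef, mul_comp, C_comp, parity_aux n (uu n) (uu_even n)]
    ring
  have h2 : ((legendrePoly n).comp (-X)).eval x = (legendrePoly n).eval (-x) := by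
    simp [eval_comp]
  rw [← h2, h1]
  simp

lemma w_cont (γ : ℝ) : ContinuousOn (fun x : ℝ => (1 - x^2) ^ (-γ)) (Ioo (-1) 1) := by
  apply ContinuousOn.rpow_const (by fun_prop)
  intro x hx
  exact Or.inl (by nlinarith [hx.1, hx.2])

lemma w_int_right (γ : ℝ) (hγ0 : 0 < γ) (hγ1 : γ < 1) :
    IntervalIntegrable (fun x : ℝ => (1 - x^2) ^ (-γ)) volume 0 1 := by
  have h1 : IntervalIntegrable (fun x : ℝ => x ^ (-γ)) volume 0 1 :=
    intervalIntegral.intervalIntegrable_rpow' (by linarith)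
  have h2 : IntervalIntegrable (fun x : ℝ => (1 - x) ^ (-γ)) volume 0 1 := by
    have := (h1.comp_sub_left 1).symm
    simpa using this
  rw [intervalIntegrable_iff_integrableOn_Ioo_of_le (by norm_num)] at h2 ⊢
  have hm : AEStronglyMeasurable (fun x : ℝ => (1 - x^2) ^ (-γ)) (volume.restrict (Ioo 0 1)) :=
    ((w_cont γ).mono (Ioo_subset_Ioo (by norm_num) le_rfl)).aestronglyMeasurable measurableSet_Ioo
  refine MeasureTheory.Integrable.mono h2 hm ?_
  filter_upwards [MeasureTheory.ae_restrict_mem measurableSet_Ioo] with x hx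
  have hx0 : 0 < x := hx.1
  have hx1 : x < 1 := hx.2
  rw [Real.norm_eq_abs, Real.norm_eq_abs, abs_of_nonneg (Real.rpow_nonneg (by nlinarith) _),
    abs_of_nonneg (Real.rpow_nonneg (by linarith) _)]
  exact Real.rpow_le_rpow_of_nonpos (by nlinarith) (by nlinarith) (by linarith)

lemma w_int_left (γ : ℝ) (hγ0 : 0 < γ) (hγ1 : γ < 1) :
    IntervalIntegrable (fun x : ℝ => (1 - x^2) ^ (-γ)) volume (-1) 0 := by
  have h := (w_int_right γ hγ0 hγ1).symm
  have h2 := (IntervalIntegrable.iff_comp_neg (by simp)).mp h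
  simp only [neg_zero, neg_neg] at h2
  convert h2 using 2 with x
  ring_nf

lemma w_int (γ : ℝ) (hγ0 : 0 < γ) (hγ1 : γ < 1) :
    IntervalIntegrable (fun x : ℝ => (1 - x^2) ^ (-γ)) volume (-1) 1 :=
  (w_int_left γ hγ0 hγ1).trans (w_int_right γ hγ0 hγ1)

lemma pw_int (γ : ℝ) (hγ0 : 0 < γ) (hγ1 : γ < 1) (p : Polynomial ℝ) :
    IntervalIntegrable (fun x : ℝ => p.eval x * (1 - x^2) ^ (-γ)) volume (-1) 1 := by
  obtain ⟨M, hM⟩ := (isCompact_Icc (a := (-1:ℝ)) (b := 1)).exists_bound_of_continuousOn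
    (p.continuous.continuousOn)
  have hw := w_int γ hγ0 hγ1
  have hMw : IntervalIntegrable (fun x : ℝ => M * (1 - x^2) ^ (-γ)) volume (-1) 1 :=
    hw.const_mul M
  rw [intervalIntegrable_iff_integrableOn_Ioo_of_le (by norm_num)] at hMw ⊢
  have hm : AEStronglyMeasurable (fun x : ℝ => p.eval x * (1 - x^2) ^ (-γ))
      (volume.restrict (Ioo (-1) 1)) :=
    (p.continuous.continuousOn).mul (w_cont γ) |>.aestronglyMeasurable
      measurableSet_Ioo
  refine MeasureTheory.Integrable.mono hMw hm ?_
  filter_upwards [MeasureTheory.ae_restrict_mem measurableSet_Ioo] with x hx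
  have h1 : 0 ≤ (1 - x^2) ^ (-γ) := Real.rpow_nonneg (by nlinarith [hx.1, hx.2]) _
  have h2 : |p.eval x| ≤ M := by
    have := hM x (Ioo_subset_Icc_self hx)
    simpa using this
  rw [Real.norm_eq_abs, Real.norm_eq_abs, abs_mul, abs_of_nonneg h1]
  calc |p.eval x| * (1 - x^2) ^ (-γ) ≤ M * (1 - x^2) ^ (-γ) := by
        apply mul_le_mul_of_nonneg_right h2 h1
    _ ≤ |M * (1 - x^2) ^ (-γ)| := le_abs_self _

noncomputable def J (γ : ℝ) (p : Polynomial ℝ) : ℝ :=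
  ∫ x in (-1:ℝ)..1, p.eval x * (1 - x^2) ^ (-γ)

lemma J_add (γ : ℝ) (hγ0 : 0 < γ) (hγ1 : γ < 1) (p q : Polynomial ℝ) :
    J γ (p + q) = J γ p + J γ q := by
  unfold J
  simp only [eval_add, add_mul]
  exact integral_add (pw_int γ hγ0 hγ1 p) (pw_int γ hγ0 hγ1 q)

lemma J_sub (γ : ℝ) (hγ0 : 0 < γ) (hγ1 : γ < 1) (p q : Polynomial ℝ) :
    J γ (p - q) = J γ p - J γ q := by
  unfold J
  simp only [eval_sub, sub_mul]
  exact integral_sub (pw_int γ hγ0 hγ1 p) (pw_int γ hγ0 hγ1 q)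

lemma J_Cmul (γ : ℝ) (c : ℝ) (p : Polynomial ℝ) : J γ (C c * p) = c * J γ p := by
  unfold J
  simp only [eval_mul, eval_C, mul_assoc]
  rw [intervalIntegral.integral_const_mul]

lemma ibp (γ : ℝ) (hγ0 : 0 < γ) (hγ1 : γ < 1) (g : Polynomial ℝ) :
    J γ (((1:Polynomial ℝ) - X^2) * derivative g) = 2*(1-γ) * J γ (X * g) := by
  set q : Polynomial ℝ := ((1:Polynomial ℝ) - X^2) * derivative g - C (2*(1-γ)) * (X * g) with hq
  have hFcont : Continuous (fun x : ℝ => g.eval x * (1-x^2)^(1-γ)) := by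
    apply g.continuous.mul
    rw [continuous_iff_continuousAt]
    intro x
    exact ContinuousAt.rpow_const (by fun_prop) (Or.inr (by linarith))
  have hderiv : ∀ x ∈ Ioo (-1:ℝ) 1,
      HasDerivAt (fun x : ℝ => g.eval x * (1-x^2)^(1-γ)) (q.eval x * (1-x^2)^(-γ)) x := by
    intro x hx
    have hpos : 0 < 1 - x^2 := by nlinarith [hx.1, hx.2]
    have h1 : HasDerivAt (fun y : ℝ => 1 - y^2) (-2*x) x := by
      simpa using ((hasDerivAt_pow 2 x).const_sub 1)
    have h2 : HasDerivAt (fun y : ℝ => (1-y^2)^(1-γ)) ((-2*x) * (1-γ) * (1-x^2)^((1-γ)-1)) x :=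
      HasDerivAt.rpow_const h1 (Or.inl (ne_of_gt hpos))
    have h3 := (g.hasDerivAt x).mul h2
    convert h3 using 1
    case e'_4 => rfl
    case e'_5 => rfl
    case e'_8 => rfl
    have e1 : (1-x^2)^((1-γ)-1) = (1-x^2)^(-γ) := by norm_num
    have e2 : (1-x^2)^(1-γ) = (1-x^2) * (1-x^2)^(-γ) := by
      rw [show (1-γ) = 1 + (-γ) by ring, Real.rpow_add hpos, Real.rpow_one]
    rw [hq]
    simp only [eval_sub, eval_mul, eval_one, eval_pow, eval_X, eval_C]
    rw [e1, e2]
    ring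
  have hint : IntervalIntegrable (fun x : ℝ => q.eval x * (1-x^2)^(-γ)) volume (-1) 1 :=
    pw_int γ hγ0 hγ1 q
  have key := intervalIntegral.integral_eq_sub_of_hasDerivAt_of_le (by norm_num : (-1:ℝ) ≤ 1)
    hFcont.continuousOn hderiv hint
  have hz : (1:ℝ) - γ ≠ 0 := by linarith
  have hF1 : g.eval 1 * (1-(1:ℝ)^2)^(1-γ) = 0 := by
    norm_num
    exact Or.inr (Real.zero_rpow hz)
  have hFm1 : g.eval (-1) * (1-(-1:ℝ)^2)^(1-γ) = 0 := by
    norm_num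
    exact Or.inr (Real.zero_rpow hz)
  rw [hF1, hFm1, sub_zero] at key
  have hJq : J γ q = 0 := key
  rw [hq, J_sub γ hγ0 hγ1, J_Cmul] at hJq
  linarith

lemma realBeta (a b : ℝ) (ha : 0 < a) (hb : 0 < b) :
    ∫ x in (0:ℝ)..1, x^(a-1)*(1-x)^(b-1)
      = Real.Gamma a * Real.Gamma b / Real.Gamma (a+b) := by
  have h := Complex.Gamma_mul_Gamma_eq_betaIntegral (s := (a:ℂ)) (t := (b:ℂ))
    (by simpa using ha) (by simpa using hb)
  have hbeta : Complex.betaIntegral (a:ℂ) (b:ℂ)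
      = ((∫ x in (0:ℝ)..1, x^(a-1)*(1-x)^(b-1) : ℝ) : ℂ) := by
    rw [Complex.betaIntegral, ← intervalIntegral.integral_ofReal]
    apply intervalIntegral.integral_congr
    intro x hx
    rw [Set.uIcc_of_le (by norm_num : (0:ℝ) ≤ 1)] at hx
    obtain ⟨hx0, hx1⟩ := hx
    show (x:ℂ) ^ ((a:ℂ) - 1) * ((1:ℂ) - (x:ℂ)) ^ ((b:ℂ) - 1) = ((x ^ (a-1) * (1-x) ^ (b-1) : ℝ) : ℂ)
    rw [Complex.ofReal_mul, Complex.ofReal_cpow hx0, Complex.ofReal_cpow (by linarith)]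
    push_cast
    ring
  rw [hbeta, ← Complex.ofReal_add] at h
  rw [Complex.Gamma_ofReal, Complex.Gamma_ofReal, Complex.Gamma_ofReal] at h
  have h2 : Real.Gamma a * Real.Gamma b
      = Real.Gamma (a+b) * ∫ x in (0:ℝ)..1, x^(a-1)*(1-x)^(b-1) := by
    exact_mod_cast h
  have hab : Real.Gamma (a+b) ≠ 0 := (Real.Gamma_pos_of_pos (by linarith)).ne'
  field_simp
  linarith [h2]

lemma q0_val (γ : ℝ) (hγ0 : 0 < γ) (hγ1 : γ < 1) :
    (∫ x in (-1:ℝ)..1, (1 - x^2) ^ (-γ))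
      = 2 ^ (1 - 2*γ) * Real.Gamma (1-γ)^2 / Real.Gamma (2 - 2*γ) := by
  have hcomp := intervalIntegral.integral_comp_mul_add
    (f := fun y : ℝ => (1 - y^2) ^ (-γ)) (a := 0) (b := 1) (two_ne_zero) (-1)
  norm_num at hcomp
  have hstep : ∫ t in (0:ℝ)..1, (1 - (2*t + -1)^2) ^ (-γ)
      = ∫ t in (0:ℝ)..1, (4:ℝ)^(-γ) * (t^((1-γ)-1) * (1-t)^((1-γ)-1)) := by
    apply intervalIntegral.integral_congr
    intro t ht
    rw [Set.uIcc_of_le (by norm_num : (0:ℝ) ≤ 1)] at ht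
    obtain ⟨ht0, ht1⟩ := ht
    show (1 - (2*t + -1)^2) ^ (-γ) = (4:ℝ)^(-γ) * (t^((1-γ)-1) * (1-t)^((1-γ)-1))
    have hfact : 1 - (2*t + -1)^2 = (4*t) * (1-t) := by ring
    rw [hfact, Real.mul_rpow (by linarith) (by linarith),
      Real.mul_rpow (by norm_num) ht0]
    have he : (1:ℝ) - γ - 1 = -γ := by ring
    rw [he]
    ring
  have hBeta := realBeta (1-γ) (1-γ) (by linarith) (by linarith)
  have hfour : (4:ℝ)^(-γ) = 2^(-(2*γ)) := by
    have h4 : (4:ℝ) = 2^(2:ℝ) := by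
      rw [show ((2:ℝ):ℝ) = ((2:ℕ):ℝ) by norm_num, Real.rpow_natCast]
      norm_num
    rw [h4, ← Real.rpow_mul (by norm_num)]
    norm_num
  have h2γ : ((1:ℝ)-γ) + (1-γ) = 2 - 2*γ := by ring
  have main : ∫ x in (-1:ℝ)..1, (1-x^2)^(-γ)
      = 2 * ∫ x in (0:ℝ)..1, (1-(2*x + -1)^2)^(-γ) := by
    rw [hcomp]
    ring
  rw [main, hstep, intervalIntegral.integral_const_mul, hBeta, h2γ, hfour]
  have htwo : 2 * (2:ℝ)^(-(2*γ)) = 2^(1-2*γ) := by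
    rw [show (1-2*γ) = 1 + -(2*γ) by ring, Real.rpow_add two_pos, Real.rpow_one]
  rw [← htwo]
  ring

theorem integral_legendre_symmetric_weight (γ : ℝ) (hγ0 : 0 < γ) (hγ1 : γ < 1)
    (q : ℕ → ℝ) (hq : ∀ m, q m = ∫ x in (-1 : ℝ)..1, P m x * (1 - x ^ 2) ^ (-γ)) :
    (∀ m : ℕ, Odd m → q m = 0) ∧
    q 0 = 2 ^ (1 - 2 * γ) * Real.Gamma (1 - γ) ^ 2 / Real.Gamma (2 - 2 * γ) ∧
    ∀ m : ℕ, Even m →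
      q (m + 2) = ((m + 2 * γ) * (m + 1)) / ((m + 3 - 2 * γ) * (m + 2)) * q m := by
  have hqJ : ∀ m, q m = J γ (legendrePoly m) := by
    intro m
    rw [hq m]
    rfl
  refine ⟨?_, ?_, ?_⟩
  · intro m hm
    rw [hq m]
    have hodd := intervalIntegral.integral_comp_neg (a := (-1:ℝ)) (b := 1)
      (f := fun x => P m x * (1 - x ^ 2) ^ (-γ))
    simp only [neg_neg] at hodd
    have hptw : ∀ x : ℝ, P m (-x) * (1 - (-x) ^ 2) ^ (-γ) = -(P m x * (1 - x ^ 2) ^ (-γ)) := by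
      intro x
      have hpar := LP_parity m x
      rw [Odd.neg_one_pow hm] at hpar
      show (legendrePoly m).eval (-x) * (1 - (-x) ^ 2) ^ (-γ) = _
      rw [hpar, neg_sq]
      simp only [P]
      ring
    have h1 : ∫ x in (-1:ℝ)..1, P m (-x) * (1 - (-x) ^ 2) ^ (-γ)
        = ∫ x in (-1:ℝ)..1, -(P m x * (1 - x ^ 2) ^ (-γ)) := by
      simp only [hptw]
    rw [h1, intervalIntegral.integral_neg] at hodd
    linarith [hodd]
  · rw [hq 0]
    have hP0 : ∀ x : ℝ, P 0 x = 1 := by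
      intro x
      show (legendrePoly 0).eval x = 1
      unfold legendrePoly
      simp
    calc ∫ x in (-1:ℝ)..1, P 0 x * (1 - x ^ 2) ^ (-γ)
        = ∫ x in (-1:ℝ)..1, (1 - x ^ 2) ^ (-γ) := by
          apply intervalIntegral.integral_congr
          intro x _
          show P 0 x * (1 - x ^ 2) ^ (-γ) = (1 - x ^ 2) ^ (-γ)
          rw [hP0 x, one_mul]
      _ = _ := q0_val γ hγ0 hγ1
  · intro m _
    have E1 : ∀ n : ℕ, (n:ℝ)*((n:ℝ)+1) * J γ (legendrePoly n)
        = 2*γ * J γ (X * derivative (legendrePoly n)) := by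
      intro n
      have h := congrArg (J γ) (PODE n)
      rw [ibp γ hγ0 hγ1 (derivative (legendrePoly n))] at h
      rw [J_sub γ hγ0 hγ1, J_Cmul, J_Cmul] at h
      linear_combination h
    have E2 : J γ (derivative (legendrePoly (m+1)))
        = J γ (X * derivative (legendrePoly m)) + ((m:ℝ)+1) * J γ (legendrePoly m) := by
      have h := congrArg (J γ) (PI m)
      rwa [J_add γ hγ0 hγ1, J_Cmul] at h
    have E3 : J γ (X * derivative (legendrePoly (m+2)))
        = ((m:ℝ)+2) * J γ (legendrePoly (m+2)) + J γ (derivative (legendrePoly (m+1))) := by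
      have h := congrArg (J γ) (PII m)
      rwa [J_add γ hγ0 hγ1, J_Cmul] at h
    have E1m := E1 m
    have E1m2 := E1 (m+2)
    push_cast at E1m2
    rw [hqJ m, hqJ (m+2)]
    have hkey : ((m:ℝ)+2)*((m:ℝ)+3-2*γ) * J γ (legendrePoly (m+2))
        = ((m:ℝ)+1)*((m:ℝ)+2*γ) * J γ (legendrePoly m) := by
      linear_combination E1m2 + 2*γ*E3 + 2*γ*E2 - E1m
    have hm0 : (0:ℝ) ≤ (m:ℝ) := Nat.cast_nonneg m
    have hden1 : ((m:ℝ)+3-2*γ) ≠ 0 := by nlinarith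
    have hden2 : ((m:ℝ)+2) ≠ 0 := by positivity
    rw [div_mul_eq_mul_div, eq_div_iff (by exact mul_ne_zero hden1 hden2)]
    linear_combination hkey
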